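/- (Aperture change for the averaged non-tangential maximal function.) Let n ≥ 1 and let u : ℝⁿ × (0,∞) → ℂ be measurable. For β > 0 define 𝓝^β u(x) := sup_{(y,t) : |x−y| < βt} ( (βt)^{−n} ∫_{B(y,βt)} |u(z,t)|² dz )^{1/2}. Then there exists a constant C = C(n) > 0 such that for every β ≥ 1, ‖𝓝^β u‖_{L¹(ℝⁿ)} ≤ C βⁿ ‖𝓝¹ u‖_{L¹(ℝⁿ)}. -/

import Mathlib

open MeasureTheory Set
open scoped ENNReal

noncomputable section

/-- The averaged non-tangential maximal function of aperture `β`: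
`𝓝^β u (x) = sup_{(y,t) : |x−y| < βt, t > 0} ( (βt)^{−n} ∫_{B(y,βt)} |u(z,t)|² dz )^{1/2}`. -/
def ntMax (n : ℕ) (β : ℝ) (u : EuclideanSpace ℝ (Fin n) × ℝ → ℂ)
    (x : EuclideanSpace ℝ (Fin n)) : ℝ≥0∞ :=
  ⨆ (y : EuclideanSpace ℝ (Fin n)) (t : ℝ) (_ : 0 < t) (_ : dist x y < β * t),
    ((∫⁻ z in Metric.ball y (β * t), (‖u (z, t)‖₊ : ℝ≥0∞) ^ 2) /
        ENNReal.ofReal ((β * t) ^ n)) ^ (1 / 2 : ℝ)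

open Metric

lemma ntMax_isOpen (n : ℕ) (β : ℝ) (u : EuclideanSpace ℝ (Fin n) × ℝ → ℂ) (a : ℝ≥0∞) :
    IsOpen {x | a < ntMax n β u x} := by
  rw [Metric.isOpen_iff]
  intro x hx
  simp only [mem_setOf_eq, ntMax, lt_iSup_iff] at hx
  obtain ⟨y, t, ht, hd, hc⟩ := hx
  refine ⟨β * t - dist x y, by linarith, fun x' hx' => ?_⟩
  rw [mem_ball] at hx'
  have hd' : dist x' y < β * t := by
    have := dist_triangle x' x y
    linarith [this]
  exact lt_of_lt_of_le hc
    (le_iSup_of_le y (le_iSup_of_le t (le_iSup_of_le ht (le_iSup_of_le hd' le_rfl))))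

lemma key (n : ℕ) (hn : 1 ≤ n) {β : ℝ} (hβ : 1 ≤ β)
    {u : EuclideanSpace ℝ (Fin n) × ℝ → ℂ} (hu : Measurable u)
    {lam t : ℝ} (hlam : 0 < lam) (ht : 0 < t) {x y : EuclideanSpace ℝ (Fin n)}
    (hxy : dist x y < β * t)
    (hbig : ENNReal.ofReal (2 ^ (n + 1) * lam) <
      ((∫⁻ z in Metric.ball y (β * t), (‖u (z, t)‖₊ : ℝ≥0∞) ^ 2) /
        ENNReal.ofReal ((β * t) ^ n)) ^ (1 / 2 : ℝ)) :
    volume (Metric.ball (0 : EuclideanSpace ℝ (Fin n)) 1) * ENNReal.ofReal (t ^ n) ≤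
      2 * volume ({x' | ENNReal.ofReal lam < ntMax n 1 u x'} ∩
        Metric.closedBall x (3 * (β * t))) := by
  haveI : Nontrivial (EuclideanSpace ℝ (Fin n)) :=
    Module.nontrivial_of_finrank_pos (R := ℝ) (by rw [finrank_euclideanSpace_fin]; omega)
  have hβ0 : (0:ℝ) < β := lt_of_lt_of_le one_pos hβ
  have hβt : 0 < β * t := mul_pos hβ0 ht
  set F := {x' | ENNReal.ofReal lam < ntMax n 1 u x'} with hF
  set ω := volume (Metric.ball (0 : EuclideanSpace ℝ (Fin n)) 1) with hωdef
  have hω0 : ω ≠ 0 := (measure_ball_pos _ _ one_pos).ne'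
  have hωtop : ω ≠ ∞ := measure_ball_lt_top.ne
  set T1 := ENNReal.ofReal (t ^ n) with hT1def
  have hT10 : T1 ≠ 0 := (ENNReal.ofReal_pos.mpr (pow_pos ht n)).ne'
  have hT1top : T1 ≠ ∞ := ENNReal.ofReal_ne_top
  by_contra hcon
  push_neg at hcon
  -- notation
  set f : EuclideanSpace ℝ (Fin n) → ℝ≥0∞ := fun z => (‖u (z, t)‖₊ : ℝ≥0∞) ^ 2 with hfdef
  have h1 : Measurable fun z : EuclideanSpace ℝ (Fin n) => u (z, t) :=
    hu.comp (measurable_id.prodMk measurable_const)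
  have hfm : Measurable f := (h1.nnnorm.coe_nnreal_ennreal).pow_const 2
  set I := ∫⁻ z in Metric.ball y (β * t), f z with hIdef
  -- Step A : lower bound for I
  have hTβ0 : ENNReal.ofReal ((β * t) ^ n) ≠ 0 :=
    (ENNReal.ofReal_pos.mpr (pow_pos hβt n)).ne'
  have hTβtop : ENNReal.ofReal ((β * t) ^ n) ≠ ∞ := ENNReal.ofReal_ne_top
  have h2 : (ENNReal.ofReal (2 ^ (n + 1) * lam)) ^ (2 : ℝ)
      < I / ENNReal.ofReal ((β * t) ^ n) := by
    have h3 := ENNReal.rpow_lt_rpow hbig two_pos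
    rwa [← ENNReal.rpow_mul, show (1 / 2 : ℝ) * 2 = 1 by norm_num, ENNReal.rpow_one] at h3
  have hI : ENNReal.ofReal (4 ^ (n + 1) * lam ^ 2 * (β ^ n * t ^ n)) < I := by
    have h4 := (ENNReal.lt_div_iff_mul_lt (Or.inl hTβ0) (Or.inl hTβtop)).mp h2
    calc ENNReal.ofReal (4 ^ (n + 1) * lam ^ 2 * (β ^ n * t ^ n))
        = (ENNReal.ofReal (2 ^ (n + 1) * lam)) ^ (2 : ℝ) * ENNReal.ofReal ((β * t) ^ n) := by
          rw [ENNReal.ofReal_rpow_of_pos (by positivity), ← ENNReal.ofReal_mul (by positivity)]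
          congr 1
          rw [show (2:ℝ) = ((2:ℕ):ℝ) by norm_num, Real.rpow_natCast]
          rw [mul_pow, mul_pow, show ((4:ℝ))^(n+1) = (2^(n+1))^2 by
            rw [← pow_mul, show (4:ℝ) = 2^2 by norm_num, ← pow_mul, mul_comm]]
          ring
      _ < I := h4
  -- Step B : pointwise bound on G
  set G := Metric.ball y ((β + 1) * t) \ F with hGdef
  have hFopen : IsOpen F := ntMax_isOpen n 1 u (ENNReal.ofReal lam)
  have hGm : MeasurableSet G := measurableSet_ball.diff hFopen.measurableSet
  have hJ : ∀ x' ∈ G, (∫⁻ z in Metric.ball x' t, f z)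
      ≤ (ENNReal.ofReal lam) ^ (2 : ℝ) * T1 := by
    intro x' hx'
    have hx'F : ntMax n 1 u x' ≤ ENNReal.ofReal lam := not_lt.mp hx'.2
    have hterm : ((∫⁻ z in Metric.ball x' (1 * t), f z) /
        ENNReal.ofReal ((1 * t) ^ n)) ^ (1 / 2 : ℝ) ≤ ntMax n 1 u x' := by
      refine le_iSup_of_le x' (le_iSup_of_le t (le_iSup_of_le ht (le_iSup_of_le ?_ le_rfl)))
      simpa using ht
    have h5 : (∫⁻ z in Metric.ball x' t, f z) / T1 ≤ (ENNReal.ofReal lam) ^ (2 : ℝ) := by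
      have h6 : (((∫⁻ z in Metric.ball x' t, f z) / T1) ^ (1 / 2 : ℝ)) ^ (2 : ℝ)
          ≤ (ENNReal.ofReal lam) ^ (2 : ℝ) := by
        refine ENNReal.rpow_le_rpow ?_ (by norm_num)
        simpa [hT1def] using hterm.trans hx'F
      rwa [← ENNReal.rpow_mul, show (1 / 2 : ℝ) * 2 = 1 by norm_num, ENNReal.rpow_one] at h6
    exact (ENNReal.div_le_iff hT10 hT1top).mp h5
  -- Step C : Fubini
  have swap : (∫⁻ x' in G, ∫⁻ z, (if dist z x' < t then f z else 0))
      = ∫⁻ z, f z * volume (Metric.ball z t ∩ G) := by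
    rw [lintegral_lintegral_swap]
    · refine lintegral_congr fun z => ?_
      have : ∀ x', (if dist z x' < t then f z else 0)
          = (Metric.ball z t).indicator (fun _ => f z) x' := by
        intro x'
        by_cases h : x' ∈ Metric.ball z t
        · rw [Set.indicator_of_mem h, if_pos (by rwa [Metric.mem_ball, dist_comm] at h)]
        · rw [Set.indicator_of_notMem h, if_neg (by rwa [Metric.mem_ball, dist_comm] at h)]
      simp_rw [this]
      rw [lintegral_indicator measurableSet_ball, setLIntegral_const,
        Measure.restrict_apply measurableSet_ball]
    · have hset : MeasurableSet {p : EuclideanSpace ℝ (Fin n) × EuclideanSpace ℝ (Fin n) |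
          dist p.2 p.1 < t} :=
        (isOpen_lt (continuous_snd.dist continuous_fst) continuous_const).measurableSet
      exact (Measurable.ite hset (hfm.comp measurable_snd) measurable_const).aemeasurable
  -- rewrite inner integral of step B as the if-form
  have hiff : ∀ x', (∫⁻ z in Metric.ball x' t, f z)
      = ∫⁻ z, (if dist z x' < t then f z else 0) := by
    intro x'
    rw [← lintegral_indicator measurableSet_ball]
    refine lintegral_congr fun z => ?_
    by_cases h : z ∈ Metric.ball x' t
    · rw [Set.indicator_of_mem h, if_pos (by rwa [Metric.mem_ball] at h)]
    · rw [Set.indicator_of_notMem h, if_neg (by rwa [Metric.mem_ball] at h)]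
  -- Step D : per-point measure bound
  have hz2 : ∀ z ∈ Metric.ball y (β * t), ω * T1 ≤ 2 * volume (Metric.ball z t ∩ G) := by
    intro z hz
    rw [mem_ball] at hz
    have hsub1 : Metric.ball z t ⊆ Metric.ball y ((β + 1) * t) := by
      apply ball_subset_ball'
      nlinarith [dist_comm z y ▸ hz]
    have hsub2 : Metric.ball z t ⊆ Metric.closedBall x (3 * (β * t)) := by
      intro w hw
      rw [mem_ball] at hw
      rw [mem_closedBall]
      have h7 := dist_triangle w z y
      have h8 := dist_triangle w y x
      have h9 : dist y x < β * t := by rw [dist_comm]; exact hxy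
      have h10 : t ≤ β * t := by nlinarith
      nlinarith
    have hballz : volume (Metric.ball z t) = ω * T1 := by
      rw [Measure.addHaar_ball volume z ht.le, finrank_euclideanSpace_fin, mul_comm]
    have hsplit : volume (Metric.ball z t) ≤ volume (Metric.ball z t ∩ G)
        + volume (F ∩ Metric.closedBall x (3 * (β * t))) := by
      have : Metric.ball z t ⊆ (Metric.ball z t ∩ G) ∪
          (F ∩ Metric.closedBall x (3 * (β * t))) := by
        intro w hw
        by_cases hwF : w ∈ F
        · exact Or.inr ⟨hwF, hsub2 hw⟩
        · exact Or.inl ⟨hw, hsub1 hw, hwF⟩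
      exact (measure_mono this).trans (measure_union_le _ _)
    set a := ω * T1 with hadef
    set b := volume (Metric.ball z t ∩ G) with hbdef
    set D := volume (F ∩ Metric.closedBall x (3 * (β * t))) with hDdef
    have ha : a ≠ ∞ := ENNReal.mul_ne_top hωtop hT1top
    have hb : b ≠ ∞ := by
      refine ne_top_of_le_ne_top ha ?_
      rw [← hballz]
      exact measure_mono inter_subset_left
    have h2a : a + a ≤ 2 * b + 2 * D := by
      have := add_le_add (hballz ▸ hsplit) (hballz ▸ hsplit)
      calc a + a ≤ (b + D) + (b + D) := this
        _ = 2 * b + 2 * D := by ring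
    have h2b : 2 * b + 2 * D < 2 * b + a :=
      ENNReal.add_lt_add_left (ENNReal.mul_ne_top (by norm_num) hb) hcon
    have : a + a < 2 * b + a := lt_of_le_of_lt h2a h2b
    exact le_of_lt ((ENNReal.add_lt_add_iff_right ha).mp this)
  -- Step D' : lower bound  ω * T1 * I ≤ 2 * ∫⁻ z, f z * vol(ball z t ∩ G)
  have hlow : ω * T1 * I ≤ 2 * ∫⁻ z, f z * volume (Metric.ball z t ∩ G) := by
    have e1 : ω * T1 * I = ∫⁻ z, (Metric.ball y (β * t)).indicator
        (fun z => ω * T1 * f z) z := by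
      rw [lintegral_indicator measurableSet_ball, hIdef,
        lintegral_const_mul' _ _ (ENNReal.mul_ne_top hωtop hT1top)]
    rw [e1, ← lintegral_const_mul' _ _ (by norm_num : (2:ℝ≥0∞) ≠ ∞)]
    refine lintegral_mono fun z => ?_
    by_cases hzmem : z ∈ Metric.ball y (β * t)
    · rw [indicator_of_mem hzmem]
      calc ω * T1 * f z ≤ 2 * volume (Metric.ball z t ∩ G) * f z :=
            mul_le_mul_left (hz2 z hzmem) _
        _ = 2 * (f z * volume (Metric.ball z t ∩ G)) := by ring
    · rw [indicator_of_notMem hzmem]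
      exact zero_le
  -- Step E : upper bound
  have hup : (∫⁻ x' in G, ∫⁻ z, (if dist z x' < t then f z else 0))
      ≤ (ENNReal.ofReal lam) ^ (2 : ℝ) * T1 *
        (ENNReal.ofReal ((β + 1) ^ n) * T1 * ω) := by
    have step1 : (∫⁻ x' in G, ∫⁻ z, (if dist z x' < t then f z else 0))
        ≤ ∫⁻ _x' in G, (ENNReal.ofReal lam) ^ (2 : ℝ) * T1 := by
      refine setLIntegral_mono measurable_const fun x' hx' => ?_
      rw [← hiff x']
      exact hJ x' hx'
    refine step1.trans ?_
    rw [setLIntegral_const]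
    refine mul_le_mul_right ?_ _
    have : volume G ≤ volume (Metric.ball y ((β + 1) * t)) := measure_mono diff_subset
    refine this.trans_eq ?_
    rw [Measure.addHaar_ball volume y (by positivity), finrank_euclideanSpace_fin,
      mul_pow, ENNReal.ofReal_mul (by positivity), hT1def]
  -- combine
  have hcomb : ω * T1 * I ≤ (ω * T1) *
      (2 * ((ENNReal.ofReal lam) ^ (2 : ℝ) * ENNReal.ofReal ((β + 1) ^ n) * T1)) := by
    calc ω * T1 * I ≤ 2 * ∫⁻ z, f z * volume (Metric.ball z t ∩ G) := hlow
      _ = 2 * (∫⁻ x' in G, ∫⁻ z, (if dist z x' < t then f z else 0)) := by rw [swap]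
      _ ≤ 2 * ((ENNReal.ofReal lam) ^ (2 : ℝ) * T1 *
            (ENNReal.ofReal ((β + 1) ^ n) * T1 * ω)) := mul_le_mul_right hup _
      _ = (ω * T1) * (2 * ((ENNReal.ofReal lam) ^ (2 : ℝ) *
            ENNReal.ofReal ((β + 1) ^ n) * T1)) := by ring
  have hcanc : I ≤ 2 * ((ENNReal.ofReal lam) ^ (2 : ℝ) *
      ENNReal.ofReal ((β + 1) ^ n) * T1) := by
    refine (ENNReal.mul_le_mul_iff_right ?_ ?_).mp hcomb
    · exact mul_ne_zero hω0 hT10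
    · exact ENNReal.mul_ne_top hωtop hT1top
  have hup2 : I ≤ ENNReal.ofReal (2 ^ (n + 1) * lam ^ 2 * (β ^ n * t ^ n)) := by
    refine hcanc.trans ?_
    rw [ENNReal.ofReal_rpow_of_pos hlam, hT1def,
      ← ENNReal.ofReal_mul (by positivity), ← ENNReal.ofReal_mul (by positivity),
      ← ENNReal.ofReal_ofNat, ← ENNReal.ofReal_mul (by norm_num)]
    refine ENNReal.ofReal_le_ofReal ?_
    have hb1 : (β + 1) ^ n ≤ (2 * β) ^ n := by
      apply pow_le_pow_left₀ (by positivity)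
      linarith
    have : lam ^ (2:ℝ) = lam ^ 2 := by
      rw [show (2:ℝ) = ((2:ℕ):ℝ) by norm_num, Real.rpow_natCast]
    rw [this]
    calc 2 * (lam ^ 2 * (β + 1) ^ n * t ^ n) ≤ 2 * (lam ^ 2 * (2 * β) ^ n * t ^ n) := by
          have h0 : (0:ℝ) ≤ lam ^ 2 := by positivity
          have h0t : (0:ℝ) ≤ t ^ n := by positivity
          nlinarith [mul_le_mul_of_nonneg_left hb1 h0]
      _ = 2 ^ (n + 1) * lam ^ 2 * (β ^ n * t ^ n) := by rw [mul_pow]; ring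
  have hfinal : ENNReal.ofReal (2 ^ (n + 1) * lam ^ 2 * (β ^ n * t ^ n))
      < ENNReal.ofReal (2 ^ (n + 1) * lam ^ 2 * (β ^ n * t ^ n)) := by
    calc ENNReal.ofReal (2 ^ (n + 1) * lam ^ 2 * (β ^ n * t ^ n))
        ≤ ENNReal.ofReal (4 ^ (n + 1) * lam ^ 2 * (β ^ n * t ^ n)) := by
          refine ENNReal.ofReal_le_ofReal ?_
          have h4n : (2:ℝ) ^ (n + 1) ≤ 4 ^ (n + 1) := by
            apply pow_le_pow_left₀ (by norm_num) (by norm_num)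
          have h0 : (0:ℝ) ≤ lam ^ 2 * (β ^ n * t ^ n) := by positivity
          nlinarith
      _ < I := hI
      _ ≤ ENNReal.ofReal (2 ^ (n + 1) * lam ^ 2 * (β ^ n * t ^ n)) := hup2
  exact absurd hfinal (lt_irrefl _)

lemma level (n : ℕ) (hn : 1 ≤ n) {β : ℝ} (hβ : 1 ≤ β)
    {u : EuclideanSpace ℝ (Fin n) × ℝ → ℂ} (hu : Measurable u)
    {lam : ℝ} (hlam : 0 < lam) :
    volume {x | ENNReal.ofReal (2 ^ (n + 1) * lam) < ntMax n β u x} ≤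
      ENNReal.ofReal (2 * 12 ^ n * β ^ n) *
        volume {x | ENNReal.ofReal lam < ntMax n 1 u x} := by
  haveI : Nontrivial (EuclideanSpace ℝ (Fin n)) :=
    Module.nontrivial_of_finrank_pos (R := ℝ) (by rw [finrank_euclideanSpace_fin]; omega)
  have hβ0 : (0:ℝ) < β := lt_of_lt_of_le one_pos hβ
  set F := {x | ENNReal.ofReal lam < ntMax n 1 u x} with hFdef
  set E := {x | ENNReal.ofReal (2 ^ (n + 1) * lam) < ntMax n β u x} with hEdef
  have hc0 : (0:ℝ) < 2 * 12 ^ n * β ^ n := by positivity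
  by_cases hFtop : volume F = ∞
  · rw [hFtop, ENNReal.mul_top (ENNReal.ofReal_pos.mpr hc0).ne']
    exact le_top
  set ω := volume (Metric.ball (0 : EuclideanSpace ℝ (Fin n)) 1) with hωdef
  have hω0 : ω ≠ 0 := (measure_ball_pos _ _ one_pos).ne'
  have hωtop : ω ≠ ∞ := measure_ball_lt_top.ne
  set M : ℝ := max 1 (2 * (volume F).toReal / ω.toReal) with hMdef
  set R : ℝ := 3 * (β * M) with hRdef
  have H : ∀ a ∈ E, ∃ t : ℝ, 0 < t ∧ 3 * (β * t) ≤ R ∧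
      ω * ENNReal.ofReal (t ^ n) ≤
        2 * volume (F ∩ Metric.closedBall a (3 * (β * t))) := by
    intro a ha
    rw [hEdef] at ha
    simp only [mem_setOf_eq, ntMax, lt_iSup_iff] at ha
    obtain ⟨y, t, ht, hd, hbig⟩ := ha
    have hm := key n hn hβ hu hlam ht hd hbig
    refine ⟨t, ht, ?_, hm⟩
    -- radius bound
    have hball : ω * ENNReal.ofReal (t ^ n) ≤ 2 * volume F :=
      hm.trans (mul_le_mul_right (measure_mono inter_subset_left) _)
    have h2F : (2 : ℝ≥0∞) * volume F ≠ ∞ := ENNReal.mul_ne_top (by norm_num) hFtop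
    have htr := ENNReal.toReal_mono h2F hball
    rw [ENNReal.toReal_mul, ENNReal.toReal_mul, ENNReal.toReal_ofReal (by positivity)] at htr
    have hωR : 0 < ω.toReal := ENNReal.toReal_pos hω0 hωtop
    have htn : t ^ n ≤ 2 * (volume F).toReal / ω.toReal := by
      rw [le_div_iff₀ hωR]
      calc t ^ n * ω.toReal = ω.toReal * t ^ n := by ring
        _ ≤ (2:ℝ≥0∞).toReal * (volume F).toReal := htr
        _ = 2 * (volume F).toReal := by norm_num
    have htM : t ≤ M := by
      by_cases ht1 : t ≤ 1
      · exact ht1.trans (le_max_left _ _)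
      · push_neg at ht1
        calc t ≤ t ^ n := le_self_pow₀ ht1.le (by omega)
          _ ≤ 2 * (volume F).toReal / ω.toReal := htn
          _ ≤ M := le_max_right _ _
    rw [hRdef]
    gcongr
  choose! t0 ht0 hr0 hm0 using H
  obtain ⟨v, hvE, hvdisj, hvcov⟩ :=
    Vitali.exists_disjoint_subfamily_covering_enlargement_closedBall E id
      (fun a => 3 * (β * t0 a)) R (fun a ha => hr0 a ha) 4 (by norm_num)
  have hvc : v.Countable := by
    refine (hvdisj.mono fun a => ?_).countable_of_isOpen
      (s := fun a => Metric.ball (id a) (3 * (β * t0 a))) (fun a _ => isOpen_ball)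
      (fun a ha => ⟨a, mem_ball_self (by have := ht0 a (hvE ha); positivity)⟩)
    exact ball_subset_closedBall
  have hcov : E ⊆ ⋃ b ∈ v, Metric.closedBall b (4 * (3 * (β * t0 b))) := by
    intro a ha
    obtain ⟨b, hb, hsub⟩ := hvcov a ha
    have hmem : a ∈ Metric.closedBall (id a) (3 * (β * t0 a)) :=
      mem_closedBall_self (by have := ht0 a ha; positivity)
    exact mem_biUnion hb (hsub hmem)
  calc volume E ≤ volume (⋃ b ∈ v, Metric.closedBall b (4 * (3 * (β * t0 b)))) :=
        measure_mono hcov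
    _ ≤ ∑' b : v, volume (Metric.closedBall (b : EuclideanSpace ℝ (Fin n))
          (4 * (3 * (β * t0 b)))) := measure_biUnion_le _ hvc _
    _ ≤ ∑' b : v, ENNReal.ofReal (12 ^ n * β ^ n) *
          (2 * volume (F ∩ Metric.closedBall (b : EuclideanSpace ℝ (Fin n))
            (3 * (β * t0 b)))) := by
        refine ENNReal.tsum_le_tsum fun b => ?_
        have hbE : (b : EuclideanSpace ℝ (Fin n)) ∈ E := hvE b.2
        have htb := ht0 _ hbE
        rw [Measure.addHaar_closedBall volume _ (by positivity),
          finrank_euclideanSpace_fin]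
        have heq : (4 * (3 * (β * t0 (b : EuclideanSpace ℝ (Fin n))))) ^ n
            = 12 ^ n * β ^ n * (t0 (b : EuclideanSpace ℝ (Fin n))) ^ n := by
          rw [show (4 : ℝ) * (3 * (β * t0 (b : EuclideanSpace ℝ (Fin n))))
              = 12 * β * t0 (b : EuclideanSpace ℝ (Fin n)) by ring, mul_pow, mul_pow]
        rw [heq, ENNReal.ofReal_mul (by positivity)]
        rw [mul_assoc]
        refine mul_le_mul_right ?_ _
        calc ENNReal.ofReal ((t0 (b : EuclideanSpace ℝ (Fin n))) ^ n) * ω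
            = ω * ENNReal.ofReal ((t0 (b : EuclideanSpace ℝ (Fin n))) ^ n) := mul_comm _ _
          _ ≤ 2 * volume (F ∩ Metric.closedBall (b : EuclideanSpace ℝ (Fin n))
              (3 * (β * t0 (b : EuclideanSpace ℝ (Fin n))))) := hm0 _ hbE
    _ = ENNReal.ofReal (12 ^ n * β ^ n) * 2 *
          ∑' b : v, volume (F ∩ Metric.closedBall (b : EuclideanSpace ℝ (Fin n))
            (3 * (β * t0 b))) := by
        rw [ENNReal.tsum_mul_left, ENNReal.tsum_mul_left, mul_assoc]
    _ ≤ ENNReal.ofReal (12 ^ n * β ^ n) * 2 * volume F := by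
        refine mul_le_mul_right ?_ _
        have hd2 : v.PairwiseDisjoint fun b => F ∩ Metric.closedBall b (3 * (β * t0 b)) :=
          hvdisj.mono fun a => inter_subset_right
        have hmeas : ∀ b ∈ v, MeasurableSet (F ∩ Metric.closedBall b (3 * (β * t0 b))) :=
          fun b _ => ((ntMax_isOpen n 1 u _).measurableSet).inter measurableSet_closedBall
        calc (∑' b : v, volume (F ∩ Metric.closedBall (b : EuclideanSpace ℝ (Fin n))
              (3 * (β * t0 b))))
            = volume (⋃ b ∈ v, F ∩ Metric.closedBall b (3 * (β * t0 b))) :=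
              (measure_biUnion hvc hd2 hmeas).symm
          _ ≤ volume F := measure_mono (iUnion₂_subset fun b hb => inter_subset_left)
    _ = ENNReal.ofReal (2 * 12 ^ n * β ^ n) * volume F := by
        have h12 : ENNReal.ofReal (2 * 12 ^ n * β ^ n)
            = 2 * ENNReal.ofReal (12 ^ n * β ^ n) := by
          rw [show (2:ℝ) * 12 ^ n * β ^ n = 2 * (12 ^ n * β ^ n) by ring,
            ENNReal.ofReal_mul (by norm_num), ENNReal.ofReal_ofNat]
        rw [h12]
        ring

lemma ntMax_measurable (n : ℕ) (β : ℝ) (u : EuclideanSpace ℝ (Fin n) × ℝ → ℂ) :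
    Measurable (ntMax n β u) :=
  measurable_of_Ioi fun a => (ntMax_isOpen n β u a).measurableSet

lemma layercake {α : Type*} [MeasurableSpace α] (μ : Measure α) [SigmaFinite μ]
    (f : α → ℝ≥0∞) (hf : Measurable f) :
    ∫⁻ x, f x ∂μ = ∫⁻ t in Ioi (0:ℝ), μ {x | ENNReal.ofReal t < f x} := by
  have hset : MeasurableSet {p : α × ℝ | ENNReal.ofReal p.2 < f p.1} :=
    measurableSet_lt (ENNReal.measurable_ofReal.comp measurable_snd)
      (hf.comp measurable_fst)
  have hg : Measurable fun p : α × ℝ =>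
      (if ENNReal.ofReal p.2 < f p.1 then (1:ℝ≥0∞) else 0) :=
    Measurable.ite hset measurable_const measurable_const
  have key : ∀ x, f x = ∫⁻ t in Ioi (0:ℝ), (if ENNReal.ofReal t < f x then (1:ℝ≥0∞) else 0) := by
    intro x
    have : ∀ t : ℝ, (if ENNReal.ofReal t < f x then (1:ℝ≥0∞) else 0)
        = indicator {t : ℝ | ENNReal.ofReal t < f x} (1 : ℝ → ℝ≥0∞) t := by
      intro t; simp [indicator_apply]
    simp_rw [this]
    rw [lintegral_indicator_one]
    · rcases eq_or_ne (f x) ∞ with h | h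
      · have : Ioi (0:ℝ) ∩ {t | ENNReal.ofReal t < f x} = Ioi 0 := by
          ext t; simp [h, ENNReal.ofReal_lt_top]
        rw [Measure.restrict_apply' measurableSet_Ioi, inter_comm, this]
        simp [h, Real.volume_Ioi]
      · have : Ioi (0:ℝ) ∩ {t | ENNReal.ofReal t < f x} = Ioo 0 (f x).toReal := by
          ext t
          simp only [mem_inter_iff, mem_Ioi, mem_setOf_eq, mem_Ioo]
          constructor
          · rintro ⟨h1, h2⟩
            exact ⟨h1, (ENNReal.ofReal_lt_iff_lt_toReal h1.le h).1 h2⟩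
          · rintro ⟨h1, h2⟩
            exact ⟨h1, (ENNReal.ofReal_lt_iff_lt_toReal h1.le h).2 h2⟩
        rw [Measure.restrict_apply' measurableSet_Ioi, inter_comm, this]
        rw [Real.volume_Ioo]
        simp [ENNReal.ofReal_toReal h]
    · exact measurableSet_lt (ENNReal.measurable_ofReal) measurable_const
  calc ∫⁻ x, f x ∂μ
      = ∫⁻ x, (∫⁻ t in Ioi (0:ℝ), (if ENNReal.ofReal t < f x then (1:ℝ≥0∞) else 0)) ∂μ := by
        simp_rw [← key]
    _ = ∫⁻ t in Ioi (0:ℝ), (∫⁻ x, (if ENNReal.ofReal t < f x then (1:ℝ≥0∞) else 0) ∂μ) := by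
        apply lintegral_lintegral_swap
        exact hg.aemeasurable
    _ = ∫⁻ t in Ioi (0:ℝ), μ {x | ENNReal.ofReal t < f x} := by
        apply lintegral_congr
        intro t
        have : ∀ x, (if ENNReal.ofReal t < f x then (1:ℝ≥0∞) else 0)
            = indicator {x | ENNReal.ofReal t < f x} (1 : α → ℝ≥0∞) x := by
          intro x; simp [indicator_apply]
        simp_rw [this]
        rw [lintegral_indicator_one]
        exact measurableSet_lt measurable_const hf

/-- Aperture change for the averaged non-tangential maximal function: there is a constant
`C = C(n) > 0` such that for every `β ≥ 1` and every measurable `u : ℝⁿ × (0,∞) → ℂ`,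
`‖𝓝^β u‖_{L¹(ℝⁿ)} ≤ C βⁿ ‖𝓝¹ u‖_{L¹(ℝⁿ)}`. -/
theorem stmt7 (n : ℕ) (hn : 1 ≤ n) :
    ∃ C : ℝ, 0 < C ∧
      ∀ β : ℝ, 1 ≤ β →
        ∀ u : EuclideanSpace ℝ (Fin n) × ℝ → ℂ, Measurable u →
          ∫⁻ x, ntMax n β u x ≤ ENNReal.ofReal (C * β ^ n) * ∫⁻ x, ntMax n 1 u x := by
  refine ⟨2 ^ (n + 1) * (2 * 12 ^ n), by positivity, fun β hβ u hu => ?_⟩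
  have hβ0 : (0:ℝ) < β := lt_of_lt_of_le one_pos hβ
  set c1 := ENNReal.ofReal (2 * 12 ^ n * β ^ n) with hc1
  set c2 := ENNReal.ofReal ((2:ℝ) ^ (n + 1)) with hc2
  have hc20 : c2 ≠ 0 := (ENNReal.ofReal_pos.mpr (by positivity)).ne'
  have hc2top : c2 ≠ ∞ := ENNReal.ofReal_ne_top
  set g : EuclideanSpace ℝ (Fin n) → ℝ≥0∞ := fun x => c2 * ntMax n 1 u x with hg
  have hgm : Measurable g := (ntMax_measurable n 1 u).const_mul c2
  calc ∫⁻ x, ntMax n β u x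
      = ∫⁻ s in Ioi (0:ℝ), volume {x | ENNReal.ofReal s < ntMax n β u x} :=
        layercake volume _ (ntMax_measurable n β u)
    _ ≤ ∫⁻ s in Ioi (0:ℝ), c1 * volume {x | ENNReal.ofReal s < g x} := by
        refine setLIntegral_mono' measurableSet_Ioi fun s hs => ?_
        rw [mem_Ioi] at hs
        have hlam : 0 < s / 2 ^ (n + 1) := by positivity
        have hs' : (2:ℝ) ^ (n + 1) * (s / 2 ^ (n + 1)) = s := by field_simp
        have hsets : {x | ENNReal.ofReal (s / 2 ^ (n + 1)) < ntMax n 1 u x}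
            = {x | ENNReal.ofReal s < g x} := by
          ext x
          simp only [mem_setOf_eq, hg]
          have hofs : ENNReal.ofReal s = c2 * ENNReal.ofReal (s / 2 ^ (n + 1)) := by
            rw [hc2, ← ENNReal.ofReal_mul (by positivity), hs']
          rw [hofs]
          exact (ENNReal.mul_lt_mul_iff_right hc20 hc2top).symm
        have := level n hn hβ hu hlam
        rw [hs', hsets] at this
        exact this
    _ = c1 * ∫⁻ s in Ioi (0:ℝ), volume {x | ENNReal.ofReal s < g x} :=
        lintegral_const_mul' _ _ ENNReal.ofReal_ne_top
    _ = c1 * ∫⁻ x, g x := by rw [← layercake volume g hgm]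
    _ = c1 * (c2 * ∫⁻ x, ntMax n 1 u x) := by
        rw [hg, lintegral_const_mul' _ _ hc2top]
    _ = ENNReal.ofReal (2 ^ (n + 1) * (2 * 12 ^ n) * β ^ n) * ∫⁻ x, ntMax n 1 u x := by
        rw [← mul_assoc, hc1, hc2, ← ENNReal.ofReal_mul (by positivity)]
        ring_nf
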